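/- Let X be a complex topological vector space and Γ a set of continuous linear operators on X such that for all T, S ∈ Γ with T ≠ S there exists A ∈ Γ with T = A ∘ S. If Γ is diskcyclic, then Γ is disk transitive. -/

import Mathlib

open scoped Pointwise

/-- If for all distinct `T, S ∈ Γ` there is `A ∈ Γ` with `T = A ∘ S`, then
diskcyclicity of `Γ` implies disk transitivity of `Γ`. -/
theorem stmt_8 {X : Type*} [AddCommGroup X] [Module ℂ X] [TopologicalSpace X]
    [IsTopologicalAddGroup X] [ContinuousSMul ℂ X]
    (Γ : Set (X →L[ℂ] X))
    (hfac : ∀ T ∈ Γ, ∀ S ∈ Γ, T ≠ S → ∃ A ∈ Γ, T = A ∘L S)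
    (hcyc : ∃ x : X, Dense {y : X | ∃ α : ℂ, ‖α‖ ≤ 1 ∧ ∃ T ∈ Γ, y = α • T x}) :
    ∀ U V : Set X, IsOpen U → IsOpen V → U.Nonempty → V.Nonempty →
      ∃ α : ℂ, α ≠ 0 ∧ ‖α‖ ≤ 1 ∧ ∃ T ∈ Γ, (⇑T '' (α • U) ∩ V).Nonempty := by
  intro U V hU hV hUne hVne
  obtain ⟨x, hx⟩ := hcyc
  -- small nonzero scalars send any point into a neighborhood of 0
  have hsmall : ∀ (p : X) (W : Set X), IsOpen W → (0:X) ∈ W →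
      ∃ c : ℂ, c ≠ 0 ∧ ‖c‖ ≤ 1 ∧ c • p ∈ W := by
    intro p W hW h0
    have ht : Filter.Tendsto (fun c : ℂ => c • p) (nhds 0) (nhds (0:X)) := by
      simpa using (Filter.tendsto_id (x := nhds (0:ℂ))).smul_const p
    have h := ht.eventually_mem (hW.mem_nhds h0)
    rw [Metric.eventually_nhds_iff] at h
    obtain ⟨ε, hε, h⟩ := h
    refine ⟨(min (ε/2) 1 : ℝ), ?_, ?_, h ?_⟩
    · simp only [ne_eq, Complex.ofReal_eq_zero]
      positivity
    · rw [Complex.norm_real, Real.norm_eq_abs, abs_of_pos (by positivity)]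
      exact min_le_right _ _
    · rw [dist_zero_right, Complex.norm_real, Real.norm_eq_abs, abs_of_pos (by positivity)]
      exact lt_of_le_of_lt (min_le_left _ _) (by linarith)
  -- scaled density
  have hsc : ∀ (c : ℂ), c ≠ 0 → ∀ W : Set X, IsOpen W → W.Nonempty →
      ∃ β : ℂ, ‖β‖ ≤ 1 ∧ ∃ S ∈ Γ, c • (β • S x) ∈ W := by
    intro c hc W hW hWne
    have hW' : IsOpen (c⁻¹ • W) := hW.smul₀ (inv_ne_zero hc)
    have hW'ne : (c⁻¹ • W).Nonempty := hWne.smul_set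
    obtain ⟨y, ⟨β, hβ, S, hS, hy⟩, hyW⟩ := hx.exists_mem_open hW' hW'ne
    subst hy
    exact ⟨β, hβ, S, hS, (Set.mem_inv_smul_set_iff₀ hc W _).mp hyW⟩
  by_cases h0V : (0:X) ∈ V
  · -- easy case : V is a neighborhood of 0
    obtain ⟨u₀, hu₀⟩ := hUne
    obtain ⟨y, ⟨β, hβ, T₀, hT₀, hy⟩, -⟩ := hx.exists_mem_open isOpen_univ ⟨0, trivial⟩
    obtain ⟨c, hc0, hc1, hcV⟩ := hsmall (T₀ u₀) V hV h0V
    refine ⟨c, hc0, hc1, T₀, hT₀, T₀ (c • u₀), ⟨c • u₀, Set.smul_mem_smul_set hu₀, rfl⟩, ?_⟩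
    simpa using hcV
  by_cases h0U : (0:X) ∈ U
  · -- 0 ∈ U, 0 ∉ V
    obtain ⟨δ, hδ0, hδ1, hδU⟩ := hsmall x U hU h0U
    obtain ⟨β, hβ, S, hS, hβV⟩ := hsc δ hδ0 V hV hVne
    have hβ0 : β ≠ 0 := by
      rintro rfl
      exact h0V (by simpa using hβV)
    refine ⟨β, hβ0, hβ, S, hS, S (β • (δ • x)), ⟨β • (δ • x), Set.smul_mem_smul_set hδU, rfl⟩, ?_⟩
    have : S (β • δ • x) = δ • β • S x := by
      rw [map_smul, map_smul, smul_comm]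
    rw [this]
    exact hβV
  · -- main case : 0 ∉ U, 0 ∉ V
    obtain ⟨u, ⟨a, ha1, T₁, hT₁, hu⟩, huU⟩ := hx.exists_mem_open hU hUne
    have ha0 : a ≠ 0 := by
      rintro rfl
      rw [hu] at huU
      exact h0U (by simpa using huU)
    set K : Set X := (fun c : ℂ => c • u) '' Metric.closedBall 0 1 with hK
    set C : Set X := closure K with hCdef
    have hKC : K ⊆ C := subset_closure
    have hCclosed : IsClosed C := isClosed_closure
    have h0C : (0:X) ∈ C := hKC ⟨0, by simp, by simp⟩
    have huC : u ∈ C := hKC ⟨1, by simp, by simp⟩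
    have hbal : ∀ c : ℂ, ‖c‖ ≤ 1 → ∀ y ∈ C, c • y ∈ C := by
      intro c hc y hy
      have hmaps : Set.MapsTo (fun z : X => c • z) K K := by
        rintro z ⟨b, hb, rfl⟩
        refine ⟨c * b, ?_, by simp [mul_smul]⟩
        simp only [Metric.mem_closedBall, dist_zero_right] at hb ⊢
        calc ‖c * b‖ = ‖c‖ * ‖b‖ := norm_mul _ _
        _ ≤ 1 * 1 := mul_le_mul hc hb (norm_nonneg _) zero_le_one
        _ = 1 := one_mul 1
      exact (hmaps.closure (continuous_const_smul c)) hy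
    by_cases hVC : V ⊆ C
    · -- degenerate case
      haveI hRsmul : ContinuousSMul ℝ X := by
        constructor
        have h : Continuous fun p : ℝ × X => ((p.1 : ℂ)) • p.2 :=
          (Complex.continuous_ofReal.comp continuous_fst).smul continuous_snd
        simpa [Complex.coe_smul] using h
      obtain ⟨v₀, hv₀⟩ := hVne
      have hswap : ∀ (b : ℂ) (r : ℝ) (z : X), b • (r • z) = r • (b • z) := by
        intro b r z
        rw [← Complex.coe_smul, ← Complex.coe_smul, smul_smul, smul_smul, mul_comm]
      have hbalR : ∀ r : ℝ, |r| ≤ 1 → ∀ y ∈ C, r • y ∈ C := by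
        intro r hr y hy
        rw [← Complex.coe_smul]
        exact hbal r (by rw [Complex.norm_real, Real.norm_eq_abs]; exact hr) y hy
      have hconv : Convex ℝ C := by
        refine Convex.closure ?_
        have h1 : Convex ℝ (Metric.closedBall (0:ℂ) 1) := convex_closedBall _ _
        have h2 := h1.linear_image
          { toFun := fun c : ℂ => c • u
            map_add' := fun b c => add_smul b c u
            map_smul' := fun r c => by simp [← Complex.coe_smul, smul_smul] }
        exact h2
      have hmono : ∀ {r s : ℝ}, 0 ≤ r → r ≤ s → r • C ⊆ s • C := by
        intro r s hr hrs y hy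
        obtain ⟨z, hz, rfl⟩ := hy
        rcases eq_or_lt_of_le (hr.trans hrs) with hs | hs
        · rw [← hs] at hrs ⊢
          have : r = 0 := le_antisymm hrs hr
          rw [this]
          exact ⟨z, hz, rfl⟩
        · refine ⟨(r/s) • z, hbalR (r/s) ?_ z hz, ?_⟩
          · rw [abs_of_nonneg (by positivity)]
            rw [div_le_one hs]; exact hrs
          · show s • ((r/s) • z) = r • z
            rw [smul_smul]
            congr 1
            field_simp
      have hcb : ∀ (c : ℂ) (y : X), y ∈ C → c • y ∈ ‖c‖ • C := by
        intro c y hy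
        rcases eq_or_ne c 0 with rfl | hc
        · exact ⟨y, hy, by simp⟩
        · refine ⟨(c / ‖c‖ : ℂ) • y, hbal _ ?_ y hy, ?_⟩
          · rw [norm_div, Complex.norm_real]
            rw [norm_norm, div_self (norm_ne_zero_iff.mpr hc)]
          · show ‖c‖ • ((c / ‖c‖ : ℂ) • y) = c • y
            rw [← Complex.coe_smul, smul_smul]
            congr 1
            have hA : (‖c‖ : ℂ) ≠ 0 := by simpa using norm_ne_zero_iff.mpr hc
            rw [mul_comm]
            exact div_mul_cancel₀ c hA
      have haddC : ∀ (r s : ℝ), 0 ≤ r → 0 ≤ s →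
          ∀ y ∈ r • C, ∀ z ∈ s • C, y + z ∈ (r + s) • C := by
        intro r s hr hs y hy z hz
        rw [hconv.add_smul hr hs]
        exact Set.add_mem_add hy hz
      have hVint : V ⊆ interior C := by
        rw [hV.subset_interior_iff]
        exact hVC
      have hint0 : (0:X) ∈ interior C := by
        have hv₁i : v₀ ∈ interior C := hVint hv₀
        have hneg : -v₀ ∈ closure C := by
          rw [hCclosed.closure_eq]
          have := hbalR (-1) (by norm_num) v₀ (hVC hv₀)
          simpa using this
        have h := hconv.combo_interior_closure_mem_interior hv₁i hneg
          (a := 1/2) (b := 1/2) (by norm_num) (by norm_num) (by norm_num)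
        simpa [← smul_add] using h
      have hintC : interior C ⊆ C := interior_subset
      have habs : ∀ p : X, ∃ t : ℝ, 0 < t ∧ ∃ z ∈ C, t • z = p := by
        intro p
        obtain ⟨c, hc0, hc1, hcp⟩ := hsmall p (interior C) isOpen_interior hint0
        have h1 := hcb c⁻¹ (c • p) (hintC hcp)
        rw [inv_smul_smul₀ hc0] at h1
        obtain ⟨z, hz, hzeq⟩ := h1
        exact ⟨‖c⁻¹‖, by simpa using norm_pos_iff.mpr hc0, z, hz, hzeq⟩
      have hbddN : ∀ N ∈ nhds (0:X), ∃ δ : ℝ, 0 < δ ∧ ∀ z ∈ C, δ • z ∈ N := by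
        intro N hN
        obtain ⟨N', ⟨hN'mem, hN'closed⟩, hN'sub⟩ := (closed_nhds_basis (0:X)).mem_iff.mp hN
        have hKcomp : IsCompact K := (isCompact_closedBall (0:ℂ) 1).image
          (continuous_id.smul continuous_const)
        have hKb : Bornology.IsVonNBounded ℂ K := by
          letI : UniformSpace X := IsTopologicalAddGroup.rightUniformSpace X
          haveI : IsUniformAddGroup X := isUniformAddGroup_of_addCommGroup
          exact hKcomp.totallyBounded.isVonNBounded ℂ
        have habsorb := hKb hN'mem
        rw [absorbs_iff_norm] at habsorb
        obtain ⟨r, hr⟩ := habsorb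
        set R : ℝ := max r 1 with hR
        have hR1 : (1:ℝ) ≤ R := le_max_right _ _
        have hR0 : (0:ℝ) < R := lt_of_lt_of_le one_pos hR1
        have hc : K ⊆ ((R : ℂ)) • N' := hr _ (by
          rw [Complex.norm_real, Real.norm_eq_abs, abs_of_pos hR0]; exact le_max_left _ _)
        refine ⟨R⁻¹, by positivity, ?_⟩
        intro z hz
        have hz' : R⁻¹ • z ∈ closure ((fun w : X => R⁻¹ • w) '' K) := by
          have := image_closure_subset_closure_image
            (f := fun w : X => R⁻¹ • w) (s := K) (continuous_const_smul _)
          exact this ⟨z, hz, rfl⟩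
        have himg : (fun w : X => R⁻¹ • w) '' K ⊆ N' := by
          rintro - ⟨k, hk, rfl⟩
          obtain ⟨n, hn, hkn⟩ := hc hk
          show R⁻¹ • k ∈ N'
          rw [← hkn, ← Complex.coe_smul, smul_smul]
          have : ((R⁻¹ : ℝ) : ℂ) * (R : ℂ) = 1 := by
            rw [← Complex.ofReal_mul, inv_mul_cancel₀ (ne_of_gt hR0), Complex.ofReal_one]
          rw [this, one_smul]
          exact hn
        exact hN'sub (by
          have := closure_mono himg hz'
          rwa [hN'closed.closure_eq] at this)
      have hVeps : ∃ ε : ℝ, 0 < ε ∧ ε ≤ 1 ∧ ∀ y ∈ C, v₀ + ε • y ∈ V := by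
        have hNmem : (fun y : X => v₀ + y) ⁻¹' V ∈ nhds 0 := by
          refine IsOpen.mem_nhds (hV.preimage (continuous_add_left v₀)) ?_
          show v₀ + 0 ∈ V
          rwa [add_zero]
        obtain ⟨δ, hδ0, hδ⟩ := hbddN _ hNmem
        refine ⟨min δ 1, by positivity, min_le_right _ _, ?_⟩
        intro y hy
        have h1 : (min δ 1) • y ∈ (min δ 1) • C := ⟨y, hy, rfl⟩
        have h2 : (min δ 1) • y ∈ δ • C := hmono (by positivity) (min_le_left _ _) h1
        obtain ⟨z, hz, hzeq⟩ := h2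
        have h3 : δ • z = (min δ 1) • y := hzeq
        have h4 := hδ z hz
        rw [h3] at h4
        exact h4
      obtain ⟨ε, hε0, hε1, hVeps⟩ := hVeps
      -- the ν step
      have hν : ∃ ν : ℂ, ‖ν‖ ≤ 1 ∧ ν ≠ 0 ∧ ∃ c₁ ∈ C, ν • u = v₀ + (ε/4) • c₁ := by
        have hWopen : IsOpen ((fun z : X => (4/ε) • (z - v₀)) ⁻¹' (interior C)) :=
          isOpen_interior.preimage ((continuous_id.sub continuous_const).const_smul ((4:ℝ)/ε))
        have hWv₀ : v₀ ∈ (fun z : X => (4/ε) • (z - v₀)) ⁻¹' (interior C) := by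
          simp only [Set.mem_preimage, sub_self, smul_zero]
          exact hint0
        have hclose : v₀ ∈ closure K := hVC hv₀
        rw [mem_closure_iff] at hclose
        obtain ⟨w, hwW, ν, hνball, rfl⟩ := hclose _ hWopen hWv₀
        have hν1 : ‖ν‖ ≤ 1 := by simpa [dist_zero_right] using hνball
        have hc₁ : (4/ε) • (ν • u - v₀) ∈ C := hintC hwW
        have heq : ν • u = v₀ + (ε/4) • ((4/ε) • (ν • u - v₀)) := by
          rw [smul_smul]
          have : ε/4 * (4/ε) = 1 := by field_simp
          rw [this, one_smul]
          abel
        have hν0 : ν ≠ 0 := by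
          rintro rfl
          rw [zero_smul] at heq hc₁
          apply h0V
          have hmem : (1/4 : ℝ) • ((4/ε) • ((0:X) - v₀)) ∈ C :=
            hbalR _ (by rw [abs_of_pos]; norm_num; norm_num) _ hc₁
          have hin := hVeps _ hmem
          have heq2 : v₀ + ε • ((1/4:ℝ) • ((4/ε) • ((0:X) - v₀))) = 0 := by
            rw [smul_smul, show ε * (1/4) = ε/4 by ring]
            exact heq.symm
          rwa [heq2] at hin
        exact ⟨ν, hν1, hν0, _, hc₁, heq⟩
      obtain ⟨ν, hν1, hν0, c₁, hc₁C, hνeq⟩ := hν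
      set B : ℝ := 4/(3*ε) + 1 with hBdef
      have hB4 : 0 < 4/(3*ε) := by positivity
      have hB1 : (1:ℝ) ≤ B := by rw [hBdef]; linarith
      have hBpos : 0 < B := lt_of_lt_of_le one_pos hB1
      have hanorm : 0 < ‖a‖ := norm_pos_iff.mpr ha0
      set r₀ : ℝ := (B+1)/‖a‖ with hr₀def
      have hr₀pos : 0 < r₀ := by positivity
      have hXunb : ∀ r : ℝ, ∃ p : X, ¬ p ∈ r • C := by
        intro r
        by_contra hcon
        push_neg at hcon
        rcases eq_or_ne r 0 with rfl | hr
        · obtain ⟨z, hz, hzeq⟩ := hcon v₀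
          have hzeq' : (0:ℝ) • z = v₀ := hzeq
          rw [zero_smul] at hzeq'
          apply h0V
          rw [← hzeq'] at hv₀
          exact hv₀
        · have hNmem : (fun y : X => v₀ + y) ⁻¹' V ∈ nhds (0:X) := by
            refine IsOpen.mem_nhds (hV.preimage (continuous_add_left v₀)) ?_
            show v₀ + 0 ∈ V
            rwa [add_zero]
          obtain ⟨δ, hδ0, hδ⟩ := hbddN _ hNmem
          obtain ⟨z, hz, hzeq⟩ := hcon (r • ((1/δ) • (-v₀)))
          have hzeq' : r • z = r • ((1/δ) • (-v₀)) := hzeq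
          have hzv : z = (1/δ) • (-v₀) := by
            have h6 := congrArg (fun w : X => r⁻¹ • w) hzeq'
            simp only [smul_smul] at h6
            rw [← mul_assoc, inv_mul_cancel₀ hr, one_mul, one_smul] at h6
            exact h6
          have h5 := hδ z hz
          rw [hzv, smul_smul, mul_one_div, div_self (ne_of_gt hδ0), one_smul] at h5
          have h7 : v₀ + -v₀ ∈ V := h5
          rw [add_neg_cancel] at h7
          exact h0V h7
      obtain ⟨p, hp⟩ := hXunb (r₀ + 1)
      have hWpopen : IsOpen ((fun z : X => z - p) ⁻¹' (interior C)) :=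
        isOpen_interior.preimage (continuous_id.sub continuous_const)
      have hWpne : ((fun z : X => z - p) ⁻¹' (interior C)).Nonempty :=
        ⟨p, by simp only [Set.mem_preimage, sub_self]; exact hint0⟩
      obtain ⟨d, ⟨β, hβ1, S, hS, hdeq⟩, hdW⟩ := hx.exists_mem_open hWpopen hWpne
      subst hdeq
      have hdC : β • S x - p ∈ C := hintC hdW
      have hSx : ¬ (S x ∈ r₀ • C) := by
        intro hmem
        obtain ⟨z, hz, hzeq⟩ := hmem
        have hzeq' : r₀ • z = S x := hzeq
        apply hp
        have h6 : β • S x ∈ r₀ • C := by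
          rw [← hzeq', hswap]
          exact ⟨β • z, hbal β hβ1 z hz, rfl⟩
        have h7 : -(β • S x - p) ∈ (1:ℝ) • C := by
          refine ⟨-(β • S x - p), ?_, one_smul _ _⟩
          have h8 := hbalR (-1) (by norm_num) _ hdC
          simpa using h8
        have h8 := haddC r₀ 1 (le_of_lt hr₀pos) zero_le_one _ h6 _ h7
        have h9 : β • S x + -(β • S x - p) = p := by abel
        rwa [h9] at h8
      have hST : S ≠ T₁ := by
        rintro rfl
        apply hSx
        have hTx : a⁻¹ • u = S x := by rw [hu, inv_smul_smul₀ ha0]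
        rw [← hTx]
        refine hmono (norm_nonneg _) ?_ (hcb a⁻¹ u huC)
        rw [norm_inv, hr₀def, div_eq_mul_inv]
        nlinarith [inv_pos.mpr hanorm]
      obtain ⟨A, hA, hAeq⟩ := hfac S hS T₁ hT₁ hST
      have hAu : A u = a • S x := by
        rw [hu, map_smul, hAeq]
        rfl
      have hynot : ¬ (a • S x ∈ (B+1) • C) := by
        intro hmem
        apply hSx
        obtain ⟨z, hz, hzeq⟩ := hmem
        have hzeq' : (B+1:ℝ) • z = a • S x := hzeq
        have h6 : S x = (a⁻¹ * ((B+1:ℝ):ℂ)) • z := by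
          rw [mul_smul, Complex.coe_smul, hzeq', inv_smul_smul₀ ha0]
        have h7 := hcb (a⁻¹ * ((B+1:ℝ):ℂ)) z hz
        rw [← h6] at h7
        have h8 : ‖a⁻¹ * ((B+1:ℝ):ℂ)‖ = r₀ := by
          rw [norm_mul, norm_inv, Complex.norm_real, Real.norm_eq_abs,
            abs_of_pos (by positivity), hr₀def]
          ring
        rwa [h8] at h7
      obtain ⟨t, ht0, c₂, hc₂C, hc₂eq⟩ := habs (a • S x)
      have hW₄open : IsOpen ((fun z : X => t • z - a • S x) ⁻¹' (interior C)) :=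
        isOpen_interior.preimage ((continuous_id.const_smul t).sub continuous_const)
      have hc₂W : c₂ ∈ (fun z : X => t • z - a • S x) ⁻¹' (interior C) := by
        simp only [Set.mem_preimage]
        rw [hc₂eq, sub_self]
        exact hint0
      have hc₂K : c₂ ∈ closure K := hc₂C
      rw [mem_closure_iff] at hc₂K
      obtain ⟨w, hwW, ν₂, hν₂ball, rfl⟩ := hc₂K _ hW₄open hc₂W
      set lam : ℂ := (t:ℂ) * ν₂ with hlam
      have hlamu : lam • u - a • S x ∈ C := by
        have h6 : t • (ν₂ • u) - a • S x ∈ interior C := hwW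
        have h7 : lam • u = t • (ν₂ • u) := by rw [hlam, mul_smul, Complex.coe_smul]
        rw [h7]
        exact hintC h6
      have hlamB : B < ‖lam‖ := by
        by_contra hle
        push_neg at hle
        apply hynot
        have h6 : lam • u ∈ B • C := hmono (norm_nonneg _) hle (hcb lam u huC)
        have h7 : -(lam • u - a • S x) ∈ (1:ℝ) • C := by
          refine ⟨-(lam • u - a • S x), ?_, one_smul _ _⟩
          have h8 := hbalR (-1) (by norm_num) _ hlamu
          simpa using h8
        have h8 := haddC B 1 (le_of_lt hBpos) zero_le_one _ h6 _ h7
        have h9 : lam • u + -(lam • u - a • S x) = a • S x := by abel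
        rwa [h9] at h8
      have hlam0 : lam ≠ 0 := by
        intro h
        rw [h, norm_zero] at hlamB
        linarith
      set γ : ℂ := ν * lam⁻¹ with hγdef
      have hγ0 : γ ≠ 0 := mul_ne_zero hν0 (inv_ne_zero hlam0)
      have hlamBle : B⁻¹ ≤ 3*ε/4 := by
        have hBge : 4/(3*ε) ≤ B := by rw [hBdef]; linarith
        have h6 : B⁻¹ ≤ (4/(3*ε))⁻¹ := by
          apply inv_anti₀ (by positivity) hBge
        rw [inv_div] at h6
        linarith [h6]
      have hγB : ‖γ‖ ≤ B⁻¹ := by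
        rw [hγdef, norm_mul, norm_inv]
        calc ‖ν‖ * ‖lam‖⁻¹ ≤ 1 * B⁻¹ := by
              apply mul_le_mul hν1 ?_ (by positivity) zero_le_one
              exact inv_anti₀ hBpos (le_of_lt hlamB)
          _ = B⁻¹ := one_mul _
      have hγ1 : ‖γ‖ ≤ 1 := by
        refine le_trans hγB ?_
        rw [← inv_one]
        exact inv_anti₀ one_pos hB1
      have hfinal : γ • (a • S x) ∈ V := by
        have hγlam : γ * lam = ν := by
          rw [hγdef]
          field_simp
        have h5 : γ • (lam • u) = ν • u := by rw [smul_smul, hγlam]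
        have h6 : γ • (a • S x) = ν • u + (-γ) • (lam • u - a • S x) := by
          rw [neg_smul, smul_sub, h5]
          abel
        rw [h6, hνeq]
        have h7 : (-γ) • (lam • u - a • S x) ∈ ‖γ‖ • C := by
          have h8 := hcb (-γ) _ hlamu
          rwa [norm_neg] at h8
        have h8 : (ε/4) • c₁ ∈ (ε/4) • C := ⟨c₁, hc₁C, rfl⟩
        have h9 : ‖γ‖ • C ⊆ (3*ε/4) • C :=
          hmono (norm_nonneg _) (le_trans hγB hlamBle)
        have h10 := haddC (ε/4) (3*ε/4) (by positivity) (by positivity) _ h8 _ (h9 h7)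
        have h11 : ε/4 + 3*ε/4 = ε := by ring
        rw [h11] at h10
        obtain ⟨c₄, hc₄, hc₄eq⟩ := h10
        have h12 : v₀ + (ε/4) • c₁ + (-γ) • (lam • u - a • S x)
            = v₀ + ((ε/4) • c₁ + (-γ) • (lam • u - a • S x)) := by abel
        rw [h12, ← hc₄eq]
        exact hVeps c₄ hc₄
      refine ⟨γ, hγ0, hγ1, A, hA, A (γ • u), ⟨γ • u, Set.smul_mem_smul_set huU, rfl⟩, ?_⟩
      rw [map_smul, hAu]
      exact hfinal
    · -- nondegenerate case
      have : (V ∩ Cᶜ).Nonempty := by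
        rw [Set.inter_compl_nonempty_iff]; exact fun h => hVC h
      obtain ⟨β, hβ1, S, hS, hq⟩ := hsc a ha0 (V ∩ Cᶜ) (hV.inter hCclosed.isOpen_compl) this
      have hβ0 : β ≠ 0 := by
        rintro rfl
        exact hq.2 (by simpa using h0C)
      have hST : S ≠ T₁ := by
        rintro rfl
        refine hq.2 (hKC ⟨β, by simpa using hβ1, ?_⟩)
        rw [hu]
        rw [smul_comm]
      obtain ⟨A, hA, hAeq⟩ := hfac S hS T₁ hT₁ hST
      refine ⟨β, hβ0, hβ1, A, hA, A (β • u), ⟨β • u, Set.smul_mem_smul_set huU, rfl⟩, ?_⟩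
      have : A (β • u) = a • (β • S x) := by
        rw [map_smul, hu, map_smul, hAeq]
        rw [smul_comm]
        rfl
      rw [this]
      exact hq.1
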